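/- Let N, M, L be natural numbers with L ≤ N ≤ M, N + M even, and M - N even. The number of perfect matchings on a set of N + M points, partitioned into N 'negative' and M 'positive' points with a distinguished subset of L positive points, in which every negative point is matched to a positive point and every distinguished positive point is matched to a negative point, is at most C(M - L, N - L) · N! · (M - N - 1)!!. -/

import Mathlib

open Classical

/-- A perfect matching on a finite type: a fixed-point-free involution. -/
def IsPM {α : Type*} (f : α → α) : Prop :=
  Function.Involutive f ∧ ∀ a, f a ≠ a

/-- Double factorial: `df n` is the product of odd numbers up to `n`;
`df (m-1)` counts perfect matchings on `m` points. -/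
def df : ℕ → ℕ
  | 0 => 1
  | 1 => 1
  | (n + 2) => (n + 2) * df n

/-- f is a perfect matching on s and identity off s. -/
def PMOn {α : Type*} (s : Finset α) (f : α → α) : Prop :=
  Function.Involutive f ∧ (∀ x ∈ s, f x ∈ s ∧ f x ≠ x) ∧ ∀ x, x ∉ s → f x = x

lemma df_step (m : ℕ) : (m - 1) * df (m - 3) ≤ df (m - 1) := by
  match m with
  | 0 => simp
  | 1 => simp
  | 2 => simp [df]
  | (k + 3) => simp only [Nat.add_sub_cancel, show k + 3 - 1 = k + 2 from rfl,
      show k + 3 - 3 = k from rfl, df]; exact le_refl _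

lemma pmOn_card_le {α : Type*} [Fintype α] [DecidableEq α] (n : ℕ) :
    ∀ (s : Finset α), s.card = n →
    ((Finset.univ : Finset (α → α)).filter (fun f => PMOn s f)).card ≤ df (n - 1) := by
  induction n using Nat.strong_induction_on with
  | _ n ih =>
    intro s hs
    rcases s.eq_empty_or_nonempty with rfl | ⟨a, ha⟩
    · have h0 : n = 0 := by simpa using hs.symm
      subst h0
      have hsub : ((Finset.univ : Finset (α → α)).filter (fun f => PMOn (∅ : Finset α) f))
          ⊆ {fun x => x} := by
        intro f hf
        simp only [Finset.mem_filter, Finset.mem_univ, true_and] at hf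
        simp only [Finset.mem_singleton]
        funext x
        exact hf.2.2 x (by simp)
      calc _ ≤ ({fun x => x} : Finset (α → α)).card := Finset.card_le_card hsub
        _ = 1 := Finset.card_singleton _
        _ ≤ df (0 - 1) := by simp [df]
    · have hmaps : ∀ f ∈ (Finset.univ : Finset (α → α)).filter (fun f => PMOn s f),
          f a ∈ s.erase a := by
        intro f hf
        simp only [Finset.mem_filter, Finset.mem_univ, true_and] at hf
        exact Finset.mem_erase.2 ⟨(hf.2.1 a ha).2, (hf.2.1 a ha).1⟩
      rw [Finset.card_eq_sum_card_fiberwise hmaps]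
      have hfiber : ∀ b ∈ s.erase a,
          (((Finset.univ : Finset (α → α)).filter (fun f => PMOn s f)).filter
            (fun f => f a = b)).card ≤ df (n - 3) := by
        intro b hb
        obtain ⟨hba, hbs⟩ := Finset.mem_erase.1 hb
        set t : Finset α := s \ {a, b} with ht
        have habs : ({a, b} : Finset α) ⊆ s := by
          intro x hx
          rcases Finset.mem_insert.1 hx with rfl | hx
          · exact ha
          · rw [Finset.mem_singleton] at hx; exact hx ▸ hbs
        have htcard : t.card = n - 2 := by
          rw [ht, Finset.card_sdiff_of_subset habs]
          have h2 : ({a, b} : Finset α).card = 2 := by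
            rw [Finset.card_insert_of_notMem (by simpa using (Ne.symm hba)),
              Finset.card_singleton]
          rw [h2, hs]
        have hΦ : ∀ f ∈ ((Finset.univ : Finset (α → α)).filter (fun f => PMOn s f)).filter
              (fun f => f a = b),
            (fun x => if x = a ∨ x = b then x else f x) ∈
              (Finset.univ : Finset (α → α)).filter (fun f => PMOn t f) := by
          intro f hf
          simp only [Finset.mem_filter, Finset.mem_univ, true_and] at hf ⊢
          obtain ⟨⟨hinv, hin, hout⟩, hfa⟩ := hf
          have hfb : f b = a := by rw [← hfa, hinv]
          have hkey : ∀ x, ¬(x = a ∨ x = b) → ¬(f x = a ∨ f x = b) := by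
            intro x hx h
            push_neg at hx
            rcases h with h | h
            · exact hx.2 (by rw [← hfa, ← h, hinv])
            · exact hx.1 (by rw [← hfb, ← h, hinv])
          refine ⟨?_, ?_, ?_⟩
          · intro x
            by_cases hx : x = a ∨ x = b
            · simp [hx]
            · simp only [if_neg hx, if_neg (hkey x hx)]
              exact hinv x
          · intro x hx
            rw [ht, Finset.mem_sdiff] at hx
            obtain ⟨hxs, hxab⟩ := hx
            have hxab' : ¬(x = a ∨ x = b) := by simpa using hxab
            simp only [if_neg hxab']
            refine ⟨?_, (hin x hxs).2⟩
            rw [ht, Finset.mem_sdiff]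
            refine ⟨(hin x hxs).1, by simpa using hkey x hxab'⟩
          · intro x hx
            by_cases hxab : x = a ∨ x = b
            · simp [hxab]
            · simp only [if_neg hxab]
              apply hout
              intro hxs
              exact hx (by rw [ht, Finset.mem_sdiff]; exact ⟨hxs, by simpa using hxab⟩)
        have hinj : Set.InjOn (fun (f : α → α) (x : α) => if x = a ∨ x = b then x else f x)
            (((Finset.univ : Finset (α → α)).filter (fun f => PMOn s f)).filter
              (fun f => f a = b)) := by
          intro f1 h1 f2 h2 heq
          simp only [Finset.coe_filter, Set.mem_setOf_eq, Finset.mem_filter, Finset.mem_univ,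
            true_and] at h1 h2
          funext x
          by_cases hxa : x = a
          · subst hxa; rw [h1.2, h2.2]
          by_cases hxb : x = b
          · subst hxb
            have e1 : f1 x = a := by conv_lhs => rw [← h1.2]; rw [h1.1.1 a]
            have e2 : f2 x = a := by conv_lhs => rw [← h2.2]; rw [h2.1.1 a]
            rw [e1, e2]
          have hx : ¬(x = a ∨ x = b) := by simp [hxa, hxb]
          have := congrFun heq x
          simpa [if_neg hx] using this
        calc _ ≤ ((Finset.univ : Finset (α → α)).filter (fun f => PMOn t f)).card :=
              Finset.card_le_card_of_injOn _ hΦ hinj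
          _ ≤ df (n - 2 - 1) := by
              have hlt : n - 2 < n := by
                have h1 : 1 ≤ n := by rw [← hs]; exact Finset.card_pos.2 ⟨a, ha⟩
                omega
              exact ih (n - 2) hlt t htcard
          _ = df (n - 3) := by congr 1
      calc ∑ b ∈ s.erase a, (((Finset.univ : Finset (α → α)).filter (fun f => PMOn s f)).filter
            (fun f => f a = b)).card
          ≤ ∑ _b ∈ s.erase a, df (n - 3) := Finset.sum_le_sum hfiber
        _ = (s.erase a).card * df (n - 3) := by rw [Finset.sum_const, smul_eq_mul]
        _ = (n - 1) * df (n - 3) := by rw [Finset.card_erase_of_mem ha, hs]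
        _ ≤ df (n - 1) := df_step n

/-- The number of perfect matchings on `N + M` points (`N` negative, `M` positive,
with `L` distinguished positive points) in which every negative point is matched
to a positive point and every distinguished positive point to a negative point is
at most `C(M-L, N-L) · N! · (M-N-1)!!`. -/
theorem constrained_matchings_bound {α : Type*} [Fintype α] [DecidableEq α]
    (Neg Pos : Finset α) (Dist : Finset α) (N M L : ℕ)
    (hdisj : Disjoint Neg Pos) (hcover : Neg ∪ Pos = Finset.univ)
    (hDist : Dist ⊆ Pos) (hN : Neg.card = N) (hM : Pos.card = M) (hL : Dist.card = L)
    (hLN : L ≤ N) (hNM : N ≤ M) (heven : Even (N + M)) (heven' : Even (M - N)) :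
    ((Finset.univ : Finset (α → α)).filter
        (fun f => IsPM f ∧ (∀ a ∈ Neg, f a ∈ Pos) ∧ (∀ a ∈ Dist, f a ∈ Neg))).card
      ≤ (M - L).choose (N - L) * Nat.factorial N * df (M - N - 1) := by
  classical
  set S : Finset (α → α) := (Finset.univ : Finset (α → α)).filter
      (fun f => IsPM f ∧ (∀ a ∈ Neg, f a ∈ Pos) ∧ (∀ a ∈ Dist, f a ∈ Neg)) with hSdef
  have hmemS : ∀ f ∈ S, Function.Involutive f ∧ (∀ a, f a ≠ a) ∧
      (∀ a ∈ Neg, f a ∈ Pos) ∧ (∀ a ∈ Dist, f a ∈ Neg) := by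
    intro f hf
    rw [hSdef, Finset.mem_filter] at hf
    obtain ⟨-, ⟨h1, h2⟩, h3, h4⟩ := hf
    exact ⟨h1, h2, h3, h4⟩
  have hPN : ∀ x ∈ Pos, x ∉ Neg := fun x hx hn => Finset.disjoint_left.1 hdisj hn hx
  have hNP : ∀ x, x ∉ Neg → x ∈ Pos := by
    intro x hx
    have hx2 : x ∈ Neg ∪ Pos := hcover ▸ Finset.mem_univ x
    rcases Finset.mem_union.1 hx2 with h | h
    · exact absurd h hx
    · exact h
  set π : (α → α) → (α → α) := fun f x => if x ∈ Neg ∨ f x ∈ Neg then f x else x with hπdef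
  have hπNeg : ∀ (f : α → α), ∀ y ∈ Neg, π f y = f y := by
    intro f y hy; simp only [hπdef]; rw [if_pos (Or.inl hy)]
  have himgchar : ∀ f ∈ S, ∀ x, x ∈ Finset.image f Neg ↔ f x ∈ Neg := by
    intro f hf x
    obtain ⟨hinv, -, -, -⟩ := hmemS f hf
    constructor
    · rintro hx
      obtain ⟨y, hy, rfl⟩ := Finset.mem_image.1 hx
      rw [hinv y]; exact hy
    · intro hx
      exact Finset.mem_image.2 ⟨f x, hx, hinv x⟩
  have himgPos : ∀ f ∈ S, Finset.image f Neg ⊆ Pos := by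
    intro f hf x hx
    obtain ⟨y, hy, rfl⟩ := Finset.mem_image.1 hx
    exact (hmemS f hf).2.2.1 y hy
  have himgcard : ∀ f ∈ S, (Finset.image f Neg).card = N := by
    intro f hf
    rw [Finset.card_image_of_injective _ (hmemS f hf).1.injective, hN]
  have himgπ : ∀ f ∈ S, Finset.image (π f) Neg = Finset.image f Neg := by
    intro f hf
    apply Finset.image_congr
    intro y hy
    exact hπNeg f y hy
  -- properties of elements of S.image π
  have hg_all : ∀ g ∈ S.image π, (∀ y ∈ Neg, g (g y) = y) ∧
      (∀ x, x ∉ Neg → x ∉ Finset.image g Neg → g x = x) ∧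
      Set.InjOn g ↑Neg ∧ Finset.image g Neg ⊆ Pos ∧ (Finset.image g Neg).card = N ∧
      Dist ⊆ Finset.image g Neg := by
    intro g hg
    obtain ⟨f, hfS, rfl⟩ := Finset.mem_image.1 hg
    obtain ⟨hinv, hne, hNegPos, hDistNeg⟩ := hmemS f hfS
    have himg := himgπ f hfS
    refine ⟨?_, ?_, ?_, ?_, ?_, ?_⟩
    · intro y hy
      rw [hπNeg f y hy]
      have h1 : π f (f y) = f (f y) := by
        simp only [hπdef]
        rw [if_pos (Or.inr (by rw [hinv y]; exact hy))]
      rw [h1, hinv y]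
    · intro x hx hximg
      rw [himg, himgchar f hfS] at hximg
      simp only [hπdef]
      rw [if_neg (by simp [hx, hximg])]
    · intro y hy z hz hyz
      rw [Finset.mem_coe] at hy hz
      rw [hπNeg f y hy, hπNeg f z hz] at hyz
      exact hinv.injective hyz
    · rw [himg]; exact himgPos f hfS
    · rw [himg]; exact himgcard f hfS
    · intro d hd
      rw [himg, himgchar f hfS]
      exact hDistNeg d hd
  -- Step A: fiber decomposition over π
  have hA : S.card = ∑ g ∈ S.image π, (S.filter (fun f => π f = g)).card :=
    Finset.card_eq_sum_card_fiberwise (fun f hf => Finset.mem_image_of_mem π hf)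
  -- Step B: each fiber has at most df (M - N - 1) elements
  have hB : ∀ g ∈ S.image π, (S.filter (fun f => π f = g)).card ≤ df (M - N - 1) := by
    intro g hg
    obtain ⟨f0, hf0S, hf0g⟩ := Finset.mem_image.1 hg
    set R : Finset α := Pos \ Finset.image f0 Neg with hRdef
    have hRcard : R.card = M - N := by
      rw [hRdef, Finset.card_sdiff_of_subset (himgPos f0 hf0S), hM, himgcard f0 hf0S]
    have himgeq : ∀ f ∈ S.filter (fun f => π f = g),
        Finset.image f Neg = Finset.image f0 Neg := by
      intro f hf
      rw [← himgπ f (Finset.mem_filter.1 hf).1, ← himgπ f0 hf0S,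
        (Finset.mem_filter.1 hf).2, hf0g]
    have hmemR : ∀ f ∈ S.filter (fun f => π f = g), ∀ x, x ∈ R ↔ (x ∈ Pos ∧ f x ∉ Neg) := by
      intro f hf x
      rw [hRdef, Finset.mem_sdiff, ← himgeq f hf, himgchar f (Finset.mem_filter.1 hf).1]
    set Φ : (α → α) → (α → α) := fun f x => if x ∈ Neg ∨ f x ∈ Neg then x else f x with hΦdef
    have hΦmem : ∀ f ∈ S.filter (fun f => π f = g),
        Φ f ∈ (Finset.univ : Finset (α → α)).filter (fun h => PMOn R h) := by
      intro f hf
      have hfS := (Finset.mem_filter.1 hf).1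
      obtain ⟨hinv, hne, hNegPos, hDistNeg⟩ := hmemS f hfS
      rw [Finset.mem_filter]
      refine ⟨Finset.mem_univ _, ?_, ?_, ?_⟩
      · intro x
        by_cases hx : x ∈ Neg ∨ f x ∈ Neg
        · have hfx : Φ f x = x := by simp only [hΦdef]; rw [if_pos hx]
          rw [hfx, hfx]
        · push_neg at hx
          have hfx : Φ f x = f x := by
            simp only [hΦdef]; rw [if_neg (by push_neg; exact hx)]
          have h2 : ¬(f x ∈ Neg ∨ f (f x) ∈ Neg) := by
            rw [hinv x]; push_neg; exact ⟨hx.2, hx.1⟩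
          have hfx2 : Φ f (f x) = f (f x) := by
            simp only [hΦdef]; rw [if_neg h2]
          rw [hfx, hfx2, hinv x]
      · intro x hxR
        obtain ⟨hxP, hxN⟩ := (hmemR f hf x).1 hxR
        have hxNeg : x ∉ Neg := hPN x hxP
        simp only [hΦdef]
        rw [if_neg (by push_neg; exact ⟨hxNeg, hxN⟩)]
        refine ⟨?_, hne x⟩
        rw [hmemR f hf (f x)]
        exact ⟨hNP _ hxN, by rw [hinv x]; exact hxNeg⟩
      · intro x hxR
        by_cases hx : x ∈ Neg ∨ f x ∈ Neg
        · simp only [hΦdef]; rw [if_pos hx]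
        · push_neg at hx
          exact absurd ((hmemR f hf x).2 ⟨hNP x hx.1, hx.2⟩) hxR
    have hΦinj : Set.InjOn Φ ↑(S.filter (fun f => π f = g)) := by
      intro f1 h1 f2 h2 heq
      have h1' := Finset.mem_coe.1 h1
      have h2' := Finset.mem_coe.1 h2
      have hπeq : π f1 = π f2 := by
        rw [(Finset.mem_filter.1 h1').2, (Finset.mem_filter.1 h2').2]
      funext x
      have e1 : ∀ (f : α → α), (x ∈ Neg ∨ f x ∈ Neg) → π f x = f x := by
        intro f h; simp only [hπdef]; rw [if_pos h]
      have e2 : ∀ (f : α → α), ¬(x ∈ Neg ∨ f x ∈ Neg) → π f x = x := by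
        intro f h; simp only [hπdef]; rw [if_neg h]
      by_cases hx1 : x ∈ Neg ∨ f1 x ∈ Neg
      · by_cases hx2 : x ∈ Neg ∨ f2 x ∈ Neg
        · rw [← e1 f1 hx1, ← e1 f2 hx2, hπeq]
        · push_neg at hx2
          rcases hx1 with hxN | hfx
          · exact absurd hxN hx2.1
          · exfalso
            have : f1 x = x := by rw [← e1 f1 (Or.inr hfx), hπeq, e2 f2 (by push_neg; exact hx2)]
            rw [this] at hfx
            exact hx2.1 hfx
      · by_cases hx2 : x ∈ Neg ∨ f2 x ∈ Neg
        · push_neg at hx1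
          rcases hx2 with hxN | hfx
          · exact absurd hxN hx1.1
          · exfalso
            have : f2 x = x := by rw [← e1 f2 (Or.inr hfx), ← hπeq, e2 f1 (by push_neg; exact hx1)]
            rw [this] at hfx
            exact hx1.1 hfx
        · have q1 : Φ f1 x = f1 x := by simp only [hΦdef]; rw [if_neg hx1]
          have q2 : Φ f2 x = f2 x := by simp only [hΦdef]; rw [if_neg hx2]
          rw [← q1, ← q2, heq]
    calc (S.filter (fun f => π f = g)).card
        ≤ ((Finset.univ : Finset (α → α)).filter (fun h => PMOn R h)).card :=
          Finset.card_le_card_of_injOn Φ hΦmem hΦinj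
      _ ≤ df (R.card - 1) := pmOn_card_le R.card R rfl
      _ = df (M - N - 1) := by rw [hRcard]
  -- Step C: the number of distinct π-images is at most choose * N!
  have hC : (S.image π).card ≤ (M - L).choose (N - L) * Nat.factorial N := by
    have hmaps2 : ∀ g ∈ S.image π,
        Finset.image g Neg ∈ (S.image π).image (fun g => Finset.image g Neg) :=
      fun g hg => Finset.mem_image_of_mem _ hg
    rw [Finset.card_eq_sum_card_fiberwise hmaps2]
    have hbase : ((S.image π).image (fun g => Finset.image g Neg)).card
        ≤ (M - L).choose (N - L) := by
      have hmem3 : ∀ I ∈ (S.image π).image (fun g => Finset.image g Neg),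
          I \ Dist ∈ (Pos \ Dist).powersetCard (N - L) := by
        intro I hI
        obtain ⟨g, hgT, rfl⟩ := Finset.mem_image.1 hI
        obtain ⟨-, -, -, hsub, hcard, hDsub⟩ := hg_all g hgT
        rw [Finset.mem_powersetCard]
        refine ⟨Finset.sdiff_subset_sdiff hsub (subset_refl _), ?_⟩
        rw [Finset.card_sdiff_of_subset hDsub, hcard, hL]
      have hinj3 : Set.InjOn (fun I => I \ Dist)
          ↑((S.image π).image (fun g => Finset.image g Neg)) := by
        intro I1 h1 I2 h2 heq
        obtain ⟨g1, hg1, rfl⟩ := Finset.mem_image.1 (Finset.mem_coe.1 h1)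
        obtain ⟨g2, hg2, rfl⟩ := Finset.mem_image.1 (Finset.mem_coe.1 h2)
        have d1 := (hg_all g1 hg1).2.2.2.2.2
        have d2 := (hg_all g2 hg2).2.2.2.2.2
        rw [← Finset.sdiff_union_of_subset d1, ← Finset.sdiff_union_of_subset d2]
        simp only at heq
        rw [heq]
      calc _ ≤ ((Pos \ Dist).powersetCard (N - L)).card :=
            Finset.card_le_card_of_injOn _ hmem3 hinj3
        _ = (M - L).choose (N - L) := by
            rw [Finset.card_powersetCard, Finset.card_sdiff_of_subset hDist, hM, hL]
    have hfib : ∀ I ∈ (S.image π).image (fun g => Finset.image g Neg),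
        ((S.image π).filter (fun g => Finset.image g Neg = I)).card ≤ Nat.factorial N := by
      intro I hI
      rcases ((S.image π).filter (fun g => Finset.image g Neg = I)).eq_empty_or_nonempty
        with he | ⟨g0, hg0⟩
      · rw [he, Finset.card_empty]; exact Nat.zero_le _
      · have hg0T := (Finset.mem_filter.1 hg0).1
        have hg0I : Finset.image g0 Neg = I := (Finset.mem_filter.1 hg0).2
        have hIcard : I.card = N := by rw [← hg0I]; exact (hg_all g0 hg0T).2.2.2.2.1
        have hg0inj := (hg_all g0 hg0T).2.2.1
        have e0 : (↥Neg ↪ ↥I) :=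
          ⟨fun y => ⟨g0 y, by rw [← hg0I]; exact Finset.mem_image_of_mem _ y.2⟩,
            fun y z h => Subtype.ext (hg0inj y.2 z.2 (congrArg Subtype.val h))⟩
        have hcondOf : ∀ g ∈ (S.image π).filter (fun g => Finset.image g Neg = I),
            (∀ y ∈ Neg, g y ∈ I) ∧ Set.InjOn g ↑Neg := by
          intro g hg
          have hgT := (Finset.mem_filter.1 hg).1
          have hgI := (Finset.mem_filter.1 hg).2
          exact ⟨fun y hy => hgI ▸ Finset.mem_image_of_mem _ hy, (hg_all g hgT).2.2.1⟩
        set Ψ : (α → α) → (↥Neg ↪ ↥I) := fun g =>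
          if hcond : (∀ y ∈ Neg, g y ∈ I) ∧ Set.InjOn g ↑Neg then
            ⟨fun y => ⟨g y, hcond.1 y y.2⟩,
              fun y z h => Subtype.ext (hcond.2 y.2 z.2 (congrArg Subtype.val h))⟩
          else e0 with hΨdef
        have hΨinj : Set.InjOn Ψ ↑((S.image π).filter (fun g => Finset.image g Neg = I)) := by
          intro g1 h1 g2 h2 heq
          have h1' := Finset.mem_coe.1 h1
          have h2' := Finset.mem_coe.1 h2
          have c1 := hcondOf g1 h1'
          have c2 := hcondOf g2 h2'
          rw [hΨdef] at heq
          simp only [dif_pos c1, dif_pos c2, Function.Embedding.mk.injEq] at heq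
          have hNegeq : ∀ y ∈ Neg, g1 y = g2 y := by
            intro y hy
            have := DFunLike.congr_fun heq (⟨y, hy⟩ : ↥Neg)
            exact congrArg Subtype.val this
          have hI1 : Finset.image g1 Neg = I := (Finset.mem_filter.1 h1').2
          have hI2 : Finset.image g2 Neg = I := (Finset.mem_filter.1 h2').2
          have p1 := hg_all g1 (Finset.mem_filter.1 h1').1
          have p2 := hg_all g2 (Finset.mem_filter.1 h2').1
          funext x
          by_cases hxN : x ∈ Neg
          · exact hNegeq x hxN
          by_cases hxI : x ∈ I
          · obtain ⟨y, hy, hyx⟩ := Finset.mem_image.1 (hI1 ▸ hxI)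
            have hyx2 : g2 y = x := by rw [← hNegeq y hy, hyx]
            have r1 : g1 x = y := by rw [← hyx]; exact p1.1 y hy
            have r2 : g2 x = y := by rw [← hyx2]; exact p2.1 y hy
            rw [r1, r2]
          · rw [p1.2.1 x hxN (by rw [hI1]; exact hxI), p2.2.1 x hxN (by rw [hI2]; exact hxI)]
        calc ((S.image π).filter (fun g => Finset.image g Neg = I)).card
            ≤ (Finset.univ : Finset (↥Neg ↪ ↥I)).card :=
              Finset.card_le_card_of_injOn Ψ (fun g _ => Finset.mem_univ _) hΨinj
          _ = Fintype.card (↥Neg ↪ ↥I) := Finset.card_univ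
          _ = (Fintype.card ↥I).descFactorial (Fintype.card ↥Neg) := Fintype.card_embedding_eq
          _ = Nat.factorial N := by
              rw [Fintype.card_coe, Fintype.card_coe, hIcard, hN, Nat.descFactorial_self]
    calc ∑ I ∈ (S.image π).image (fun g => Finset.image g Neg),
          ((S.image π).filter (fun g => Finset.image g Neg = I)).card
        ≤ ∑ _I ∈ (S.image π).image (fun g => Finset.image g Neg), Nat.factorial N :=
          Finset.sum_le_sum hfib
      _ = ((S.image π).image (fun g => Finset.image g Neg)).card * Nat.factorial N := by
          rw [Finset.sum_const, smul_eq_mul]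
      _ ≤ (M - L).choose (N - L) * Nat.factorial N :=
          Nat.mul_le_mul_right _ hbase
  calc S.card = ∑ g ∈ S.image π, (S.filter (fun f => π f = g)).card := hA
    _ ≤ ∑ _g ∈ S.image π, df (M - N - 1) := Finset.sum_le_sum hB
    _ = (S.image π).card * df (M - N - 1) := by rw [Finset.sum_const, smul_eq_mul]
    _ ≤ ((M - L).choose (N - L) * Nat.factorial N) * df (M - N - 1) :=
        Nat.mul_le_mul_right _ hC
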